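/- Let n ≥ 1 and let f_1, …, f_n : ℝ^d → ℝ be differentiable functions such that each ∇f_i is L_i-Lipschitz for some L_i ≥ 0, and let f := (1/n)∑_{i=1}^n f_i. Then for all x, y_1, …, y_n ∈ ℝ^d, ‖∇f(x) − (1/n)∑_{i=1}^n ∇f_i(y_i)‖² ≤ ((1/n)∑_{i=1}^n L_i²) · (1/n)∑_{i=1}^n ‖x − y_i‖²; that is, the generalized smoothness condition holds with constant L = √((1/n)∑_{i=1}^n L_i²). -/

import Mathlib

open scoped BigOperators

/-- If each `∇f_i` is `L_i`-Lipschitz, then the generalized smoothness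
condition holds with constant `L = √((1/n)∑ L_i²)` for the average `f`. -/
theorem lipschitz_gradients_imply_generalized_smoothness
    (d n : ℕ) (hn : 1 ≤ n)
    (f : Fin n → EuclideanSpace ℝ (Fin d) → ℝ)
    (hdiff : ∀ i, Differentiable ℝ (f i))
    (L : Fin n → ℝ) (hL : ∀ i, 0 ≤ L i)
    (hlip : ∀ i, ∀ x y : EuclideanSpace ℝ (Fin d),
      ‖gradient (f i) x - gradient (f i) y‖ ≤ L i * ‖x - y‖) :
    ∀ (x : EuclideanSpace ℝ (Fin d)) (y : Fin n → EuclideanSpace ℝ (Fin d)),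
      ‖gradient (fun z => (1 / (n : ℝ)) * ∑ i, f i z) x
          - (1 / (n : ℝ)) • ∑ i, gradient (f i) (y i)‖ ^ 2
        ≤ ((1 / (n : ℝ)) * ∑ i, (L i) ^ 2) * ((1 / (n : ℝ)) * ∑ i, ‖x - y i‖ ^ 2) := by
  intro x y
  have hc : (0 : ℝ) ≤ 1 / (n : ℝ) := by positivity
  -- gradient of the average
  have hgrad : gradient (fun z => (1 / (n : ℝ)) * ∑ i, f i z) x
      = (1 / (n : ℝ)) • ∑ i, gradient (f i) x := by
    have hF : HasGradientAt (fun z => (1 / (n : ℝ)) * ∑ i, f i z)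
        ((1 / (n : ℝ)) • ∑ i, gradient (f i) x) x := by
      rw [hasGradientAt_iff_hasFDerivAt]
      have hsum : HasFDerivAt (fun z => ∑ i, f i z)
          (∑ i, (InnerProductSpace.toDual ℝ (EuclideanSpace ℝ (Fin d))) (gradient (f i) x)) x := by
        apply HasFDerivAt.fun_sum
        intro i _
        exact ((hdiff i x).hasGradientAt).hasFDerivAt
      have := hsum.const_mul (1 / (n : ℝ))
      convert this using 1
      · rfl
      simp [map_sum]
    exact hF.gradient
  rw [hgrad, ← smul_sub, ← Finset.sum_sub_distrib]
  have hnorm : ‖(1 / (n : ℝ)) • ∑ i, (gradient (f i) x - gradient (f i) (y i))‖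
      = (1 / (n : ℝ)) * ‖∑ i, (gradient (f i) x - gradient (f i) (y i))‖ := by
    rw [norm_smul, Real.norm_eq_abs, abs_of_nonneg hc]
  rw [hnorm, mul_pow]
  have h1 : ‖∑ i, (gradient (f i) x - gradient (f i) (y i))‖
      ≤ ∑ i, L i * ‖x - y i‖ := by
    refine (norm_sum_le _ _).trans ?_
    exact Finset.sum_le_sum fun i _ => hlip i x (y i)
  have h2 : ‖∑ i, (gradient (f i) x - gradient (f i) (y i))‖ ^ 2
      ≤ (∑ i, L i * ‖x - y i‖) ^ 2 :=
    pow_le_pow_left₀ (norm_nonneg _) h1 2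
  have h3 : (∑ i, L i * ‖x - y i‖) ^ 2
      ≤ (∑ i, (L i) ^ 2) * (∑ i, ‖x - y i‖ ^ 2) :=
    Finset.sum_mul_sq_le_sq_mul_sq _ _ _
  calc (1 / (n : ℝ)) ^ 2 * ‖∑ i, (gradient (f i) x - gradient (f i) (y i))‖ ^ 2
      ≤ (1 / (n : ℝ)) ^ 2 * ((∑ i, (L i) ^ 2) * (∑ i, ‖x - y i‖ ^ 2)) := by
        exact mul_le_mul_of_nonneg_left (h2.trans h3) (by positivity)
    _ = ((1 / (n : ℝ)) * ∑ i, (L i) ^ 2) * ((1 / (n : ℝ)) * ∑ i, ‖x - y i‖ ^ 2) := by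
        ring
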